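/- arXiv:2302.07794 — 3 statements merged into one kernel-verified Lean document; each statement's English description precedes it below -/
import Mathlib

section
/- Let θ ∈ (0,1) be irrational with convergents p_n/q_n, and let R_θ : ℝ/ℤ → ℝ/ℤ be the rotation x ↦ x + θ. For any x ∈ ℝ/ℤ and n ∈ ℕ, the circle ℝ/ℤ is the union of the arcs R_θ^i([x, x + q_n θ]) for 0 ≤ i ≤ q_{n+1} - 1 together with the arcs R_θ^j([x + q_{n+1} θ, x]) for 0 ≤ j ≤ q_n - 1, and all these arcs have pairwise disjoint interiors. -/
/-- Data of the continued fraction expansion `θ = [0; a 1, a 2, ...]` of an irrational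
`θ ∈ (0,1)` (encoded via the Gauss map iterates `t n`), together with the convergents
`p n / q n` produced by the standard recursion
`p n = a n * p (n-1) + p (n-2)`, `q n = a n * q (n-1) + q (n-2)`,
with `p 0 = 0`, `q 0 = 1`, and (`p (-1) = 1`, `q (-1) = 0`, folded into the values at `1`). -/
structure CFData (θ : ℝ) : Type where
  /-- the partial quotients `a 1, a 2, ...` (the value `a 0` is unused) -/
  a : ℕ → ℕ
  /-- the Gauss map iterates: `t 0 = θ`, `t (n+1) = (t n)⁻¹ - a (n+1)` -/
  t : ℕ → ℝ
  t_zero : t 0 = θ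
  t_mem : ∀ n, t n ∈ Set.Ioo (0 : ℝ) 1
  a_floor : ∀ n, (a (n + 1) : ℤ) = ⌊(t n)⁻¹⌋
  t_succ : ∀ n, t (n + 1) = (t n)⁻¹ - (a (n + 1) : ℝ)
  /-- numerators of the convergents -/
  p : ℕ → ℕ
  /-- denominators of the convergents -/
  q : ℕ → ℕ
  p_zero : p 0 = 0
  p_one : p 1 = 1
  q_zero : q 0 = 1
  q_one : q 1 = a 1
  p_rec : ∀ n, p (n + 2) = a (n + 2) * p (n + 1) + p n
  q_rec : ∀ n, q (n + 2) = a (n + 2) * q (n + 1) + q n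

/-- `l n = |p n - q n · θ|`. -/
noncomputable def CFData.l {θ : ℝ} (cf : CFData θ) (n : ℕ) : ℝ :=
  |(cf.p n : ℝ) - (cf.q n : ℝ) * θ|

/-- The closed arc on the circle `ℝ/ℤ` starting at `x` and ending at `x + len`
(travelling in the direction of the sign of `len`); its length is `|len|`. -/
def arcAt (x : AddCircle (1 : ℝ)) (len : ℝ) : Set (AddCircle (1 : ℝ)) :=
  (fun u : ℝ => x + (u : AddCircle (1 : ℝ))) '' Set.uIcc 0 len
open Set

namespace CFData

variable {θ : ℝ} (cf : CFData θ)

lemma t_pos (n : ℕ) : 0 < cf.t n := (cf.t_mem n).1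
lemma t_lt_one (n : ℕ) : cf.t n < 1 := (cf.t_mem n).2

lemma a_pos (n : ℕ) : 1 ≤ cf.a (n + 1) := by
  have h1 : (1 : ℝ) < (cf.t n)⁻¹ := (one_lt_inv₀ (cf.t_pos n)).2 (cf.t_lt_one n)
  have h2 : (1 : ℤ) ≤ ⌊(cf.t n)⁻¹⌋ := by
    rw [Int.le_floor]; exact_mod_cast h1.le
  have := cf.a_floor n
  omega

lemma q_pos (n : ℕ) : 1 ≤ cf.q n := by
  induction n using Nat.strong_induction_on with
  | _ n ih =>
    match n with
    | 0 => simp [cf.q_zero]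
    | 1 => rw [cf.q_one]; exact cf.a_pos 0
    | (m+2) =>
      have := ih m (by omega)
      rw [cf.q_rec]; nlinarith [cf.a_pos (m+1)]

lemma q_mono (n : ℕ) : cf.q n ≤ cf.q (n + 1) := by
  match n with
  | 0 => rw [cf.q_zero, cf.q_one]; exact cf.a_pos 0
  | (m+1) =>
    rw [cf.q_rec]
    nlinarith [cf.a_pos (m+1), cf.q_pos m, cf.q_pos (m+1)]

/-- `E n = q n θ - p n`. -/
noncomputable def E (n : ℕ) : ℝ := (cf.q n : ℝ) * θ - (cf.p n : ℝ)

lemma E_succ (n : ℕ) : cf.E (n + 1) = -cf.t (n + 1) * cf.E n := by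
  induction n with
  | zero =>
    have hθ : θ ≠ 0 := by
      have := cf.t_pos 0; rw [cf.t_zero] at this; linarith
    have ht1 := cf.t_succ 0
    rw [cf.t_zero] at ht1
    simp only [E, cf.q_one, cf.p_one, cf.q_zero, cf.p_zero, ht1]
    field_simp
    ring
  | succ m ih =>
    have htm : cf.t (m + 1) ≠ 0 := ne_of_gt (cf.t_pos (m + 1))
    have ht2 := cf.t_succ (m + 1)
    have hrec : cf.E (m + 2) = (cf.a (m + 2) : ℝ) * cf.E (m + 1) + cf.E m := by
      simp only [E, cf.q_rec, cf.p_rec]; push_cast; ring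
    have hEm : cf.E m = -cf.E (m + 1) / cf.t (m + 1) := by
      rw [ih]; field_simp
    rw [hrec, hEm, ht2]
    field_simp
    ring

lemma E_sign (n : ℕ) : 0 < (-1 : ℝ) ^ n * cf.E n := by
  induction n with
  | zero =>
    have := cf.t_pos 0; rw [cf.t_zero] at this
    simp [E, cf.q_zero, cf.p_zero]; linarith
  | succ m ih =>
    rw [E_succ]
    have := cf.t_pos (m + 1)
    rw [pow_succ]
    nlinarith

lemma l_eq (n : ℕ) : cf.l n = (-1 : ℝ) ^ n * cf.E n := by
  rw [l, abs_sub_comm, ← abs_of_pos (cf.E_sign n), abs_mul, abs_pow, abs_neg, abs_one,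
    one_pow, one_mul]
  rfl

lemma l_pos (n : ℕ) : 0 < cf.l n := by rw [l_eq]; exact cf.E_sign n

lemma l_succ_lt (n : ℕ) : cf.l (n + 1) < cf.l n := by
  rw [l_eq, l_eq, E_succ, pow_succ]
  have h := cf.E_sign n
  have h1 := cf.t_pos (n + 1)
  have h2 := cf.t_lt_one (n + 1)
  nlinarith

lemma det (n : ℕ) : (cf.p (n + 1) : ℤ) * cf.q n - cf.p n * cf.q (n + 1) = (-1) ^ n := by
  induction n with
  | zero => simp [cf.p_zero, cf.p_one, cf.q_zero]
  | succ m ih =>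
    rw [cf.p_rec, cf.q_rec]
    push_cast
    push_cast at ih
    ring_nf
    ring_nf at ih
    linarith

lemma sum_eq_one (n : ℕ) : (cf.q (n + 1) : ℝ) * cf.l n + (cf.q n : ℝ) * cf.l (n + 1) = 1 := by
  have hd := cf.det n
  have hd' : ((cf.p (n + 1) : ℝ)) * cf.q n - (cf.p n : ℝ) * cf.q (n + 1) = (-1) ^ n := by
    exact_mod_cast congrArg (fun z : ℤ => (z : ℝ)) hd
  rw [l_eq, l_eq]
  simp only [E]
  rw [pow_succ]
  have hsq : ((-1 : ℝ) ^ n) ^ 2 = 1 := by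
    rcases Nat.even_or_odd n with h | h
    · rw [h.neg_one_pow]; norm_num
    · rw [h.neg_one_pow]; norm_num
  linear_combination ((-1:ℝ)^n) * hd' + hsq

end CFData
namespace CFData

variable {θ : ℝ} (cf : CFData θ)

lemma abs_E (n : ℕ) : |cf.E n| = cf.l n := abs_sub_comm _ _

lemma E_eq (n : ℕ) : cf.E n = (-1 : ℝ) ^ n * cf.l n := by
  rw [l_eq]
  rcases Nat.even_or_odd n with h | h <;> rw [h.neg_one_pow] <;> ring

lemma decomp (n : ℕ) (k m : ℤ) : ∃ α β : ℤ,
    k = α * cf.q (n + 1) + β * cf.q n ∧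
    (k : ℝ) * θ - m = α * cf.E (n + 1) + β * cf.E n := by
  have hd := cf.det n
  have hsq : ((-1 : ℤ) ^ n) ^ 2 = 1 := by
    rcases Nat.even_or_odd n with h | h <;> rw [h.neg_one_pow] <;> norm_num
  refine ⟨(-1) ^ n * (m * cf.q n - k * cf.p n), (-1) ^ n * (k * cf.p (n + 1) - m * cf.q (n + 1)),
    ?_, ?_⟩
  · linear_combination (-k) * hsq + (-(-1 : ℤ) ^ n * k) * hd
  · have hm : (m : ℤ) = (-1) ^ n * (m * cf.q n - k * cf.p n) * cf.p (n + 1) +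
        (-1) ^ n * (k * cf.p (n + 1) - m * cf.q (n + 1)) * cf.p n := by
      linear_combination (-m) * hsq + (-(-1 : ℤ) ^ n * m) * hd
    have hk : (k : ℤ) = (-1) ^ n * (m * cf.q n - k * cf.p n) * cf.q (n + 1) +
        (-1) ^ n * (k * cf.p (n + 1) - m * cf.q (n + 1)) * cf.q n := by
      linear_combination (-k) * hsq + (-(-1 : ℤ) ^ n * k) * hd
    have hm' : (m : ℝ) = ((-1) ^ n * (m * cf.q n - k * cf.p n) : ℤ) * cf.p (n + 1) +
        (((-1) ^ n * (k * cf.p (n + 1) - m * cf.q (n + 1)) : ℤ)) * cf.p n := by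
      exact_mod_cast congrArg (fun z : ℤ => (z : ℝ)) hm
    have hk' : (k : ℝ) = ((-1) ^ n * (m * cf.q n - k * cf.p n) : ℤ) * cf.q (n + 1) +
        (((-1) ^ n * (k * cf.p (n + 1) - m * cf.q (n + 1)) : ℤ)) * cf.q n := by
      exact_mod_cast congrArg (fun z : ℤ => (z : ℝ)) hk
    simp only [E]
    push_cast at hm' hk' ⊢
    linear_combination θ * hk' - hm'

lemma abs_key (n : ℕ) (k m α β : ℤ)
    (hαβ : (k : ℝ) * θ - m = α * cf.E (n + 1) + β * cf.E n) :
    (k : ℝ) * θ - m = (-1 : ℝ) ^ n * ((β : ℝ) * cf.l n - (α : ℝ) * cf.l (n + 1)) := by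
  rw [hαβ, E_eq, E_eq, pow_succ]
  ring

/-- Best approximation: `‖kθ‖ ≥ l n` for `0 < |k| < q (n+1)`. -/
lemma best (n : ℕ) (k m : ℤ) (hk0 : k ≠ 0) (hk : |k| < (cf.q (n + 1) : ℤ)) :
    cf.l n ≤ |(k : ℝ) * θ - m| := by
  obtain ⟨α, β, hk', hαβ⟩ := cf.decomp n k m
  have habs : |(k : ℝ) * θ - m| = |(β : ℝ) * cf.l n - (α : ℝ) * cf.l (n + 1)| := by
    rw [cf.abs_key n k m α β hαβ, abs_mul, abs_pow, abs_neg, abs_one, one_pow, one_mul]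
  have hQ1 : (1 : ℤ) ≤ (cf.q n : ℤ) := by exact_mod_cast cf.q_pos n
  have hQ'1 : (1 : ℤ) ≤ (cf.q (n + 1) : ℤ) := by exact_mod_cast cf.q_pos (n + 1)
  have hl := cf.l_pos n
  have hl' := cf.l_pos (n + 1)
  have hll := cf.l_succ_lt n
  rw [habs]
  rcases lt_trichotomy α 0 with hα | hα | hα
  · rcases lt_trichotomy β 0 with hβ | hβ | hβ
    · -- both negative: k ≤ -(Q'+Q), contradiction with |k| < Q'
      exfalso
      have h1 : k ≤ -(cf.q (n + 1) : ℤ) - cf.q n := by nlinarith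
      have h2 : -|k| ≤ k := neg_abs_le k
      nlinarith
    · -- α < 0, β = 0 : k = α Q', |k| ≥ Q'
      exfalso
      subst hβ
      have h1 : k ≤ -(cf.q (n + 1) : ℤ) := by nlinarith
      have h2 : -|k| ≤ k := neg_abs_le k
      nlinarith
    · -- α < 0, β > 0 : value ≥ l n + l'
      have hαr : (α : ℝ) ≤ -1 := by exact_mod_cast (show α ≤ -1 by omega)
      have hβr : (1 : ℝ) ≤ (β : ℝ) := by exact_mod_cast hβ
      refine le_abs.2 (Or.inl ?_)
      nlinarith
  · subst hα
    simp only [Int.cast_zero, zero_mul, mul_zero, sub_zero] at *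
    have hβ0 : β ≠ 0 := by
      intro h; apply hk0; simpa [h] using hk'
    have hβr : (1 : ℝ) ≤ |(β : ℝ)| := by
      rw [← Int.cast_abs]; exact_mod_cast Int.one_le_abs hβ0
    rw [abs_mul, abs_of_pos hl]
    nlinarith
  · rcases lt_trichotomy β 0 with hβ | hβ | hβ
    · -- α > 0, β < 0 : value ≤ -(l n + l')
      have hαr : (1 : ℝ) ≤ (α : ℝ) := by exact_mod_cast hα
      have hβr : (β : ℝ) ≤ -1 := by exact_mod_cast (show β ≤ -1 by omega)
      refine le_abs.2 (Or.inr ?_)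
      nlinarith
    · exfalso
      subst hβ
      have h1 : (cf.q (n + 1) : ℤ) ≤ k := by nlinarith
      nlinarith [le_abs_self k]
    · exfalso
      have h1 : (cf.q (n + 1) : ℤ) + cf.q n ≤ k := by nlinarith
      nlinarith [le_abs_self k]

/-- One sided refinement: if `kθ - m` lies on the `E (n+1)` side and `-q (n+1) < k < q n`,
then `|kθ - m| ≥ l n + l (n+1)`. -/
lemma best2 (n : ℕ) (k m : ℤ) (hk0 : k ≠ 0) (hk1 : -(cf.q (n + 1) : ℤ) < k)
    (hk2 : k < (cf.q n : ℤ)) (hsign : 0 < (-1 : ℝ) ^ n * ((k : ℝ) * θ - m)) :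
    cf.l n + cf.l (n + 1) ≤ |(k : ℝ) * θ - m| := by
  obtain ⟨α, β, hk', hαβ⟩ := cf.decomp n k m
  have hkey := cf.abs_key n k m α β hαβ
  have hsq : ((-1 : ℝ) ^ n) ^ 2 = 1 := by
    rcases Nat.even_or_odd n with h | h <;> rw [h.neg_one_pow] <;> norm_num
  have hv : 0 < (β : ℝ) * cf.l n - (α : ℝ) * cf.l (n + 1) := by
    rw [hkey] at hsign
    nlinarith
  have habs : |(k : ℝ) * θ - m| = (β : ℝ) * cf.l n - (α : ℝ) * cf.l (n + 1) := by
    rw [hkey, abs_mul, abs_pow, abs_neg, abs_one, one_pow, one_mul, abs_of_pos hv]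
  have hQ1 : (1 : ℤ) ≤ (cf.q n : ℤ) := by exact_mod_cast cf.q_pos n
  have hQ'1 : (1 : ℤ) ≤ (cf.q (n + 1) : ℤ) := by exact_mod_cast cf.q_pos (n + 1)
  have hQQ : (cf.q n : ℤ) ≤ (cf.q (n + 1) : ℤ) := by exact_mod_cast cf.q_mono n
  have hl := cf.l_pos n
  have hl' := cf.l_pos (n + 1)
  rw [habs]
  rcases lt_trichotomy α 0 with hα | hα | hα
  · rcases lt_trichotomy β 0 with hβ | hβ | hβ
    · exfalso; nlinarith
    · exfalso; subst hβ; nlinarith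
    · have hαr : (α : ℝ) ≤ -1 := by exact_mod_cast (show α ≤ -1 by omega)
      have hβr : (1 : ℝ) ≤ (β : ℝ) := by exact_mod_cast hβ
      nlinarith
  · exfalso
    subst hα
    simp only [zero_mul, zero_add] at hk'
    rcases lt_trichotomy β 0 with hβ | hβ | hβ
    · simp only [Int.cast_zero, zero_mul, sub_zero] at hv
      have : (β : ℝ) * cf.l n ≤ -cf.l n := by
        have : (β : ℝ) ≤ -1 := by exact_mod_cast (show β ≤ -1 by omega)
        nlinarith
      nlinarith
    · subst hβ; simp at hk'; exact hk0 hk'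
    · have : (cf.q n : ℤ) ≤ k := by nlinarith
      omega
  · rcases lt_trichotomy β 0 with hβ | hβ | hβ
    · exfalso
      have hαr : (1 : ℝ) ≤ (α : ℝ) := by exact_mod_cast hα
      have hβr : (β : ℝ) ≤ -1 := by exact_mod_cast (show β ≤ -1 by omega)
      nlinarith
    · exfalso; subst hβ
      have : (cf.q (n + 1) : ℤ) ≤ k := by nlinarith
      omega
    · exfalso
      have : (cf.q (n + 1) : ℤ) + cf.q n ≤ k := by nlinarith
      omega

lemma l_add_le_one (n : ℕ) : cf.l n + cf.l (n + 1) ≤ 1 := by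
  have h := cf.sum_eq_one n
  have hQ1 : (1 : ℝ) ≤ (cf.q n : ℝ) := by exact_mod_cast cf.q_pos n
  have hQ'1 : (1 : ℝ) ≤ (cf.q (n + 1) : ℝ) := by exact_mod_cast cf.q_pos (n + 1)
  nlinarith [cf.l_pos n, cf.l_pos (n + 1)]

end CFData
open Set MeasureTheory

namespace RenormAux

local instance fact01 : Fact ((0:ℝ) < 1) := ⟨one_pos⟩

lemma coe_eq_coe {a b : ℝ} :
    (a : AddCircle (1:ℝ)) = (b : AddCircle (1:ℝ)) ↔ ∃ m : ℤ, a - b = (m : ℝ) := by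
  rw [← sub_eq_zero, ← AddCircle.coe_sub, AddCircle.coe_eq_zero_iff]
  constructor
  · rintro ⟨m, hm⟩; exact ⟨m, by simpa using hm.symm⟩
  · rintro ⟨m, hm⟩; exact ⟨m, by simp [hm]⟩

lemma mem_arcAt {y : AddCircle (1:ℝ)} {len : ℝ} {z : AddCircle (1:ℝ)} :
    z ∈ arcAt y len ↔ ∃ u ∈ Set.uIcc (0:ℝ) len, z = y + (u : AddCircle (1:ℝ)) := by
  simp [arcAt, eq_comm]

lemma continuous_coe : Continuous ((↑) : ℝ → AddCircle (1:ℝ)) :=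
  AddCircle.continuous_mk' 1

lemma isOpenMap_coe : IsOpenMap ((↑) : ℝ → AddCircle (1:ℝ)) :=
  QuotientAddGroup.isOpenMap_coe

lemma infinite_of_isOpen {U : Set (AddCircle (1:ℝ))} (hU : IsOpen U) (hne : U.Nonempty) :
    U.Infinite := by
  obtain ⟨z, hz⟩ := hne
  obtain ⟨r, rfl⟩ : ∃ r : ℝ, (r : AddCircle (1:ℝ)) = z := QuotientAddGroup.mk_surjective z
  have hV : IsOpen (((↑) : ℝ → AddCircle (1:ℝ)) ⁻¹' U) := hU.preimage continuous_coe
  obtain ⟨ε, hε, hball⟩ := Metric.isOpen_iff.1 hV r hz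
  set δ := min ε 1 with hδdef
  have hδ : 0 < δ := lt_min hε one_pos
  have hsub : Set.Ioo r (r + δ / 2) ⊆ ((↑) : ℝ → AddCircle (1:ℝ)) ⁻¹' U := by
    intro s hs
    apply hball
    rw [Metric.mem_ball, Real.dist_eq, abs_of_nonneg (by linarith [hs.1])]
    have := hs.2
    have : δ ≤ ε := min_le_left _ _
    linarith [hs.2, min_le_left ε 1]
  have hinj : Set.InjOn ((↑) : ℝ → AddCircle (1:ℝ)) (Set.Ioo r (r + δ / 2)) := by
    intro a ha b hb hab
    obtain ⟨m, hm⟩ := coe_eq_coe.1 hab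
    have h1 : |a - b| < 1 := by
      rw [abs_lt]
      constructor <;> nlinarith [ha.1, ha.2, hb.1, hb.2, min_le_right ε 1]
    have : m = 0 := by
      by_contra hm0
      have : (1:ℝ) ≤ |(m:ℝ)| := by
        rw [← Int.cast_abs]
        exact_mod_cast Int.one_le_abs hm0
      rw [hm] at h1; linarith
    rw [this] at hm; simp at hm; linarith [hm]
  have : (((↑) : ℝ → AddCircle (1:ℝ)) '' Set.Ioo r (r + δ / 2)).Infinite :=
    (Set.Ioo_infinite (by linarith)).image hinj
  exact this.mono (by rintro _ ⟨u, hu, rfl⟩; exact hsub hu)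

lemma disjoint_interior_of_finite {A B : Set (AddCircle (1:ℝ))} {S : Set (AddCircle (1:ℝ))}
    (hS : S.Finite) (h : A ∩ B ⊆ S) : Disjoint (interior A) (interior B) := by
  rw [Set.disjoint_iff_inter_eq_empty]
  by_contra hne
  have hopen : IsOpen (interior A ∩ interior B) := isOpen_interior.inter isOpen_interior
  have hinf : (interior A ∩ interior B).Infinite :=
    infinite_of_isOpen hopen (Set.nonempty_iff_ne_empty.2 hne)
  exact hinf (hS.subset ((Set.inter_subset_inter interior_subset interior_subset).trans h))

lemma volume_coe_Ioo_ge (a b : ℝ) (h1 : b - a ≤ 1) :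
    ENNReal.ofReal (b - a) ≤ volume (((↑) : ℝ → AddCircle (1:ℝ)) '' Set.Ioo a b) := by
  rcases le_or_gt b a with hab | hab
  · rw [ENNReal.ofReal_eq_zero.2 (by linarith)]; exact zero_le
  have hopen : IsOpen (((↑) : ℝ → AddCircle (1:ℝ)) '' Set.Ioo a b) :=
    isOpenMap_coe _ isOpen_Ioo
  have hmp := AddCircle.measurePreserving_mk (1:ℝ) a
  have key : volume (((↑) : ℝ → AddCircle (1:ℝ)) '' Set.Ioo a b) =
      (volume.restrict (Set.Ioc a (a + 1)))
        (((↑) : ℝ → AddCircle (1:ℝ)) ⁻¹' (((↑) : ℝ → AddCircle (1:ℝ)) '' Set.Ioo a b)) :=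
    (hmp.measure_preimage hopen.measurableSet.nullMeasurableSet).symm
  rw [key]
  have hsub : Set.Ioo a b ⊆
      ((↑) : ℝ → AddCircle (1:ℝ)) ⁻¹' (((↑) : ℝ → AddCircle (1:ℝ)) '' Set.Ioo a b) :=
    Set.subset_preimage_image _ _
  calc ENNReal.ofReal (b - a) = volume (Set.Ioo a b) := by rw [Real.volume_Ioo]
    _ = (volume.restrict (Set.Ioc a (a + 1))) (Set.Ioo a b) := by
        have hss : Set.Ioo a b ⊆ Set.Ioc a (a + 1) := fun s hs => ⟨hs.1, by
          have := hs.2; linarith⟩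
        rw [Measure.restrict_apply measurableSet_Ioo, Set.inter_eq_left.2 hss]
    _ ≤ _ := measure_mono hsub

lemma volume_pos_of_isOpen {U : Set (AddCircle (1:ℝ))} (hU : IsOpen U) (hne : U.Nonempty) :
    0 < volume U := hU.measure_pos _ hne

lemma isCompact_arcAt (y : AddCircle (1:ℝ)) (len : ℝ) : IsCompact (arcAt y len) :=
  isCompact_uIcc.image (continuous_const.add continuous_coe)

lemma open_arc_subset_interior (y : AddCircle (1:ℝ)) (len : ℝ) :
    (fun u : ℝ => y + (u : AddCircle (1:ℝ))) '' Set.Ioo (min 0 len) (max 0 len)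
      ⊆ interior (arcAt y len) := by
  apply interior_maximal
  · exact Set.image_mono Set.Ioo_subset_Icc_self
  · have : (fun u : ℝ => y + (u : AddCircle (1:ℝ))) '' Set.Ioo (min 0 len) (max 0 len) =
        (Homeomorph.addLeft y) '' (((↑) : ℝ → AddCircle (1:ℝ)) '' Set.Ioo (min 0 len) (max 0 len)) := by
      rw [Set.image_image]; rfl
    rw [this]
    exact (Homeomorph.addLeft y).isOpenMap _ (isOpenMap_coe _ isOpen_Ioo)

lemma volume_interior_arcAt_ge (y : AddCircle (1:ℝ)) (len : ℝ) (h : |len| ≤ 1) :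
    ENNReal.ofReal |len| ≤ volume (interior (arcAt y len)) := by
  have h1 : volume ((fun u : ℝ => y + (u : AddCircle (1:ℝ))) '' Set.Ioo (min 0 len) (max 0 len)) =
      volume (((↑) : ℝ → AddCircle (1:ℝ)) '' Set.Ioo (min 0 len) (max 0 len)) := by
    have heq : (fun u : ℝ => y + (u : AddCircle (1:ℝ))) '' Set.Ioo (min 0 len) (max 0 len) =
        (fun z => -y + z) ⁻¹' (((↑) : ℝ → AddCircle (1:ℝ)) '' Set.Ioo (min 0 len) (max 0 len)) := by
      ext z
      simp only [Set.mem_image, Set.mem_preimage]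
      constructor
      · rintro ⟨u, hu, rfl⟩; exact ⟨u, hu, by abel⟩
      · rintro ⟨u, hu, hz⟩; exact ⟨u, hu, by rw [hz]; abel⟩
    rw [heq, measure_preimage_add]
  have h2 : ENNReal.ofReal |len| ≤
      volume (((↑) : ℝ → AddCircle (1:ℝ)) '' Set.Ioo (min 0 len) (max 0 len)) := by
    have := volume_coe_Ioo_ge (min 0 len) (max 0 len) (by rw [max_sub_min_eq_abs]; simpa using h)
    rwa [max_sub_min_eq_abs, sub_zero] at this
  calc ENNReal.ofReal |len| ≤ _ := h2
    _ = _ := h1.symm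
    _ ≤ _ := measure_mono (open_arc_subset_interior y len)

end RenormAux
namespace RenormAux

lemma uIcc_bound {c u s : ℝ} (hs : s = 1 ∨ s = -1) (hc : 0 ≤ c)
    (h : u ∈ Set.uIcc 0 (s * c)) : 0 ≤ s * u ∧ s * u ≤ c := by
  rcases hs with rfl | rfl
  · rw [one_mul, Set.uIcc_of_le hc] at h
    exact ⟨by simpa using h.1, by simpa using h.2⟩
  · rw [Set.uIcc_of_ge (by linarith)] at h
    constructor <;> nlinarith [h.1, h.2]

lemma inter_sub {c1 c2 len1 len2 : ℝ} (x : AddCircle (1:ℝ))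
    (H : ∀ u1 ∈ Set.uIcc (0:ℝ) len1, ∀ u2 ∈ Set.uIcc (0:ℝ) len2, ∀ m : ℤ,
      c1 + u1 - (c2 + u2) = (m : ℝ) → u1 = 0 ∨ u1 = len1) :
    arcAt (x + (c1 : AddCircle (1:ℝ))) len1 ∩ arcAt (x + (c2 : AddCircle (1:ℝ))) len2 ⊆
      {x + (c1 : AddCircle (1:ℝ)), x + ((c1 + len1 : ℝ) : AddCircle (1:ℝ))} := by
  rintro z ⟨hz1, hz2⟩
  rw [mem_arcAt] at hz1 hz2
  obtain ⟨u1, hu1, h1⟩ := hz1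
  obtain ⟨u2, hu2, h2⟩ := hz2
  have he : ((c1 + u1 : ℝ) : AddCircle (1:ℝ)) = ((c2 + u2 : ℝ) : AddCircle (1:ℝ)) := by
    have h3 : x + ((c1 + u1 : ℝ) : AddCircle (1:ℝ)) = x + ((c2 + u2 : ℝ) : AddCircle (1:ℝ)) := by
      rw [AddCircle.coe_add, AddCircle.coe_add, ← add_assoc, ← add_assoc, ← h1, ← h2]
    exact add_left_cancel h3
  obtain ⟨m, hm⟩ := coe_eq_coe.1 he
  rcases H u1 hu1 u2 hu2 m hm with h0 | hlen
  · simp only [Set.mem_insert_iff, Set.mem_singleton_iff]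
    left; rw [h1, h0]; simp
  · simp only [Set.mem_insert_iff, Set.mem_singleton_iff]
    right; rw [h1, hlen, AddCircle.coe_add, add_assoc]

end RenormAux

open scoped ENNReal in
open RenormAux in
set_option maxHeartbeats 1000000 in
/-- **The `n`-th renormalization tiling.** For irrational `θ ∈ (0,1)`, any `x ∈ ℝ/ℤ` and any
`n`, the circle is the union of the arcs `R_θ^i([x, x + q n θ])` for `0 ≤ i < q (n+1)` together
with the arcs `R_θ^j([x + q (n+1) θ, x])` for `0 ≤ j < q n`, and all these arcs have pairwise
disjoint interiors. -/
theorem renormalization_tiling (θ : ℝ) (hθ : Irrational θ) (hmem : θ ∈ Set.Ioo (0 : ℝ) 1)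
    (cf : CFData θ) (x : AddCircle (1 : ℝ)) (n : ℕ)
    (A B : ℕ → Set (AddCircle (1 : ℝ)))
    (hA : ∀ i, A i =
      arcAt (x + (((i : ℝ) * θ : ℝ) : AddCircle (1 : ℝ))) ((cf.q n : ℝ) * θ - (cf.p n : ℝ)))
    (hB : ∀ j, B j =
      arcAt (x + (((j : ℝ) * θ : ℝ) : AddCircle (1 : ℝ)))
        ((cf.q (n + 1) : ℝ) * θ - (cf.p (n + 1) : ℝ))) :
    ((⋃ i ∈ Finset.range (cf.q (n + 1)), A i) ∪ ⋃ j ∈ Finset.range (cf.q n), B j) = Set.univ ∧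
    (∀ i₁ < cf.q (n + 1), ∀ i₂ < cf.q (n + 1), i₁ ≠ i₂ →
      Disjoint (interior (A i₁)) (interior (A i₂))) ∧
    (∀ j₁ < cf.q n, ∀ j₂ < cf.q n, j₁ ≠ j₂ →
      Disjoint (interior (B j₁)) (interior (B j₂))) ∧
    (∀ i < cf.q (n + 1), ∀ j < cf.q n, Disjoint (interior (A i)) (interior (B j))) := by
  haveI : Fact ((0:ℝ) < 1) := ⟨one_pos⟩
  have hEn : (cf.q n : ℝ) * θ - (cf.p n : ℝ) = cf.E n := rfl
  have hEn1' : (cf.q (n+1) : ℝ) * θ - (cf.p (n+1) : ℝ) = cf.E (n+1) := rfl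
  have hA' : ∀ i : ℕ, A i = arcAt (x + (((i : ℝ) * θ : ℝ) : AddCircle (1:ℝ))) (cf.E n) := by
    intro i; rw [hA, hEn]
  have hB' : ∀ j : ℕ, B j = arcAt (x + (((j : ℝ) * θ : ℝ) : AddCircle (1:ℝ))) (cf.E (n+1)) := by
    intro j; rw [hB, hEn1']
  set s : ℝ := (-1) ^ n with hsdef
  have hs : s = 1 ∨ s = -1 := neg_one_pow_eq_or ℝ n
  have hss : s * s = 1 := by rcases hs with h | h <;> rw [h] <;> norm_num
  have hEs : cf.E n = s * cf.l n := cf.E_eq n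
  have hEs1 : cf.E (n + 1) = -s * cf.l (n + 1) := by
    rw [cf.E_eq (n + 1), pow_succ, hsdef]; ring
  have hs' : -s = 1 ∨ -s = -1 := by
    rcases hs with h | h
    · right; rw [h]
    · left; rw [h]; ring
  have hln := cf.l_pos n
  have hln1 := cf.l_pos (n + 1)
  have hll := cf.l_succ_lt n
  have hsum1 := cf.l_add_le_one n
  have hQn : 1 ≤ cf.q n := cf.q_pos n
  have hQn1 : 1 ≤ cf.q (n + 1) := cf.q_pos (n + 1)
  have hQmono : cf.q n ≤ cf.q (n + 1) := cf.q_mono n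
  -- the H-conditions
  have HAA : ∀ i₁ i₂ : ℕ, i₁ < cf.q (n + 1) → i₂ < cf.q (n + 1) → i₁ ≠ i₂ →
      ∀ u1 ∈ Set.uIcc (0:ℝ) (cf.E n), ∀ u2 ∈ Set.uIcc (0:ℝ) (cf.E n), ∀ m : ℤ,
        (i₁ : ℝ) * θ + u1 - ((i₂ : ℝ) * θ + u2) = (m : ℝ) → u1 = 0 ∨ u1 = cf.E n := by
    intro i₁ i₂ h1 h2 hne u1 hu1 u2 hu2 m hm
    have hb1 := uIcc_bound (u := u1) hs hln.le (by rw [← hEs]; exact hu1)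
    have hb2 := uIcc_bound (u := u2) hs hln.le (by rw [← hEs]; exact hu2)
    have hk0 : (i₁ : ℤ) - i₂ ≠ 0 := sub_ne_zero.2 (by exact_mod_cast hne)
    have hkabs : |(i₁ : ℤ) - i₂| < (cf.q (n + 1) : ℤ) := by
      rw [abs_lt]; constructor <;> [skip; skip] <;> push_cast <;> omega
    have hbest := cf.best n ((i₁ : ℤ) - i₂) m hk0 hkabs
    have hval : (((i₁ : ℤ) - i₂ : ℤ) : ℝ) * θ - m = u2 - u1 := by push_cast; linarith
    rw [hval] at hbest
    have habs2 : |u2 - u1| ≤ cf.l n := by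
      rcases hs with h | h
      · rw [h] at hb1 hb2; rw [abs_le]
        constructor <;> linarith [hb1.1, hb1.2, hb2.1, hb2.2]
      · rw [h] at hb1 hb2; rw [abs_le]
        constructor <;> nlinarith [hb1.1, hb1.2, hb2.1, hb2.2]
    have heq : |u2 - u1| = cf.l n := le_antisymm habs2 hbest
    rcases (abs_eq hln.le).1 heq with hcase | hcase <;> rcases hs with h | h <;>
        rw [h] at hb1 hb2 <;> rw [hEs, h]
    · left; linarith [hb1.1, hb2.2]
    · right; nlinarith [hb1.2, hb2.1]
    · right; nlinarith [hb1.2, hb2.1]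
    · left; linarith [hb1.1, hb2.2]
  have HBB : ∀ j₁ j₂ : ℕ, j₁ < cf.q n → j₂ < cf.q n → j₁ ≠ j₂ →
      ∀ u1 ∈ Set.uIcc (0:ℝ) (cf.E (n+1)), ∀ u2 ∈ Set.uIcc (0:ℝ) (cf.E (n+1)), ∀ m : ℤ,
        (j₁ : ℝ) * θ + u1 - ((j₂ : ℝ) * θ + u2) = (m : ℝ) → u1 = 0 ∨ u1 = cf.E (n+1) := by
    intro j₁ j₂ h1 h2 hne u1 hu1 u2 hu2 m hm
    exfalso
    have hb1 := uIcc_bound (u := u1) hs' hln1.le (by rw [← hEs1]; exact hu1)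
    have hb2 := uIcc_bound (u := u2) hs' hln1.le (by rw [← hEs1]; exact hu2)
    have hk0 : (j₁ : ℤ) - j₂ ≠ 0 := sub_ne_zero.2 (by exact_mod_cast hne)
    have hkabs : |(j₁ : ℤ) - j₂| < (cf.q (n + 1) : ℤ) := by
      rw [abs_lt]; constructor <;> push_cast <;> omega
    have hbest := cf.best n ((j₁ : ℤ) - j₂) m hk0 hkabs
    have hval : (((j₁ : ℤ) - j₂ : ℤ) : ℝ) * θ - m = u2 - u1 := by push_cast; linarith
    rw [hval] at hbest
    have habs2 : |u2 - u1| ≤ cf.l (n + 1) := by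
      rcases hs' with h | h
      · rw [h] at hb1 hb2; rw [abs_le]
        constructor <;> nlinarith [hb1.1, hb1.2, hb2.1, hb2.2]
      · rw [h] at hb1 hb2; rw [abs_le]
        constructor <;> nlinarith [hb1.1, hb1.2, hb2.1, hb2.2]
    linarith
  have HAB : ∀ i j : ℕ, i < cf.q (n + 1) → j < cf.q n →
      ∀ u1 ∈ Set.uIcc (0:ℝ) (cf.E n), ∀ u2 ∈ Set.uIcc (0:ℝ) (cf.E (n+1)), ∀ m : ℤ,
        (i : ℝ) * θ + u1 - ((j : ℝ) * θ + u2) = (m : ℝ) → u1 = 0 ∨ u1 = cf.E n := by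
    intro i j hi hj u1 hu1 u2 hu2 m hm
    have hb1 := uIcc_bound (u := u1) hs hln.le (by rw [← hEs]; exact hu1)
    have hb2 := uIcc_bound (u := u2) hs' hln1.le (by rw [← hEs1]; exact hu2)
    have hw : s * (u1 - u2) = s * u1 + (-s) * u2 := by ring
    rcases eq_or_lt_of_le (add_nonneg hb1.1 hb2.1) with hzero | hpos2
    · left
      have h0 : s * u1 = 0 := by linarith [hb1.1, hb2.1]
      rcases hs with h | h <;> rw [h] at h0 <;> linarith
    · rcases eq_or_ne ((j : ℤ) - i) 0 with hk | hk0
      · -- k = 0 : u1 - u2 = m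
        right
        have hij : (j : ℝ) = (i : ℝ) := by exact_mod_cast congrArg (fun z : ℤ => (z:ℝ)) (by omega : (j:ℤ) = i)
        have hm' : u1 - u2 = (m : ℝ) := by rw [hij] at hm; linarith
        have hsm : s * (m : ℝ) = s * u1 + (-s) * u2 := by rw [← hm']; ring
        have hm0 : m ≠ 0 := by
          intro h0; rw [h0] at hsm; simp at hsm; linarith [hw, hsm]
        have h1le : (1 : ℝ) ≤ s * m := by
          have h2 : 0 < s * (m : ℝ) := by rw [hsm]; linarith
          rcases hs with h | h <;> rw [h] at h2 ⊢
          · have : 0 < m := by exact_mod_cast (by linarith : (0:ℝ) < (m:ℝ))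
            simp only [one_mul] at *; exact_mod_cast this
          · have : (m : ℝ) < 0 := by nlinarith
            have : m < 0 := by exact_mod_cast this
            have : -m ≥ 1 := by omega
            have : (1:ℝ) ≤ (-m : ℤ) := by exact_mod_cast this
            push_cast at this ⊢; linarith
        have hw1 : s * u1 = cf.l n := by
          have hle : s * u1 + (-s) * u2 ≤ cf.l n + cf.l (n + 1) := by
            linarith [hb1.2, hb2.2]
          have : s * u1 + (-s) * u2 = s * m := hsm.symm
          linarith [hb1.2, hb2.2, hsum1]
        rw [hEs]
        rcases hs with h | h <;> rw [h] at hw1 <;> rw [h] <;> linarith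
      · -- k ≠ 0
        have hk1 : -(cf.q (n + 1) : ℤ) < (j : ℤ) - i := by push_cast; omega
        have hk2 : (j : ℤ) - i < (cf.q n : ℤ) := by push_cast; omega
        have hval : (((j : ℤ) - i : ℤ) : ℝ) * θ - (-m : ℤ) = u1 - u2 := by
          push_cast; linarith
        have hsign : 0 < (-1 : ℝ) ^ n * ((((j : ℤ) - i : ℤ) : ℝ) * θ - ((-m : ℤ) : ℝ)) := by
          rw [hval, ← hsdef]; linarith [hw]
        have hbest := cf.best2 n ((j : ℤ) - i) (-m) hk0 hk1 hk2 hsign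
        rw [hval] at hbest
        have habsval : |u1 - u2| = s * u1 + (-s) * u2 := by
          rcases hs with h | h
          · rw [h] at hw hpos2 ⊢; rw [abs_of_nonneg (by linarith [hw])]; ring_nf
          · rw [h] at hw hpos2 ⊢
            rw [abs_of_nonpos (by nlinarith [hw])]; ring_nf
        rw [habsval] at hbest
        right
        have hw1 : s * u1 = cf.l n := by linarith [hb1.2, hb2.2]
        rw [hEs]
        rcases hs with h | h <;> rw [h] at hw1 <;> rw [h] <;> linarith
  -- the three disjointness statements
  have hDAA : ∀ i₁ < cf.q (n + 1), ∀ i₂ < cf.q (n + 1), i₁ ≠ i₂ →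
      Disjoint (interior (A i₁)) (interior (A i₂)) := by
    intro i₁ h1 i₂ h2 hne
    apply disjoint_interior_of_finite
      (S := {x + (((i₁:ℝ) * θ : ℝ) : AddCircle (1:ℝ)),
             x + ((((i₁:ℝ) * θ + cf.E n : ℝ)) : AddCircle (1:ℝ))})
      ((Set.finite_singleton _).insert _)
    rw [hA' i₁, hA' i₂]
    exact inter_sub x (HAA i₁ i₂ h1 h2 hne)
  have hDBB : ∀ j₁ < cf.q n, ∀ j₂ < cf.q n, j₁ ≠ j₂ →
      Disjoint (interior (B j₁)) (interior (B j₂)) := by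
    intro j₁ h1 j₂ h2 hne
    apply disjoint_interior_of_finite
      (S := {x + (((j₁:ℝ) * θ : ℝ) : AddCircle (1:ℝ)),
             x + ((((j₁:ℝ) * θ + cf.E (n+1) : ℝ)) : AddCircle (1:ℝ))})
      ((Set.finite_singleton _).insert _)
    rw [hB' j₁, hB' j₂]
    exact inter_sub x (HBB j₁ j₂ h1 h2 hne)
  have hDAB : ∀ i < cf.q (n + 1), ∀ j < cf.q n, Disjoint (interior (A i)) (interior (B j)) := by
    intro i hi j hj
    apply disjoint_interior_of_finite
      (S := {x + (((i:ℝ) * θ : ℝ) : AddCircle (1:ℝ)),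
             x + ((((i:ℝ) * θ + cf.E n : ℝ)) : AddCircle (1:ℝ))})
      ((Set.finite_singleton _).insert _)
    rw [hA' i, hB' j]
    exact inter_sub x (HAB i j hi hj)
  refine ⟨?_, hDAA, hDBB, hDAB⟩
  set U : Set (AddCircle (1:ℝ)) :=
    (⋃ i ∈ Finset.range (cf.q (n + 1)), A i) ∪ ⋃ j ∈ Finset.range (cf.q n), B j with hUdef
  set IA : Set (AddCircle (1:ℝ)) := ⋃ i ∈ Finset.range (cf.q (n + 1)), interior (A i) with hIAdef
  set IB : Set (AddCircle (1:ℝ)) := ⋃ j ∈ Finset.range (cf.q n), interior (B j) with hIBdef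
  have hAcomp : ∀ i : ℕ, IsCompact (A i) := fun i => by
    rw [hA' i]; exact isCompact_arcAt _ _
  have hBcomp : ∀ j : ℕ, IsCompact (B j) := fun j => by
    rw [hB' j]; exact isCompact_arcAt _ _
  have hUcomp : IsCompact U :=
    ((Finset.range (cf.q (n + 1))).finite_toSet.isCompact_biUnion fun i _ => hAcomp i).union
      ((Finset.range (cf.q n)).finite_toSet.isCompact_biUnion fun j _ => hBcomp j)
  have hUclosed := hUcomp.isClosed
  have habsEn : |cf.E n| = cf.l n := cf.abs_E n
  have habsEn1 : |cf.E (n + 1)| = cf.l (n + 1) := cf.abs_E (n + 1)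
  have hvolA : ∀ i : ℕ, ENNReal.ofReal (cf.l n) ≤ MeasureTheory.volume (interior (A i)) := by
    intro i
    rw [hA' i]
    have := volume_interior_arcAt_ge (x + (((i : ℝ) * θ : ℝ) : AddCircle (1:ℝ))) (cf.E n)
      (by rw [habsEn]; linarith)
    rwa [habsEn] at this
  have hvolB : ∀ j : ℕ, ENNReal.ofReal (cf.l (n + 1)) ≤ MeasureTheory.volume (interior (B j)) := by
    intro j
    rw [hB' j]
    have := volume_interior_arcAt_ge (x + (((j : ℝ) * θ : ℝ) : AddCircle (1:ℝ))) (cf.E (n + 1))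
      (by rw [habsEn1]; linarith)
    rwa [habsEn1] at this
  have hIAvol : ∑ i ∈ Finset.range (cf.q (n + 1)), MeasureTheory.volume (interior (A i)) =
      MeasureTheory.volume IA := by
    rw [hIAdef]
    exact (MeasureTheory.measure_biUnion_finset
      (fun i hi j hj hij => hDAA i (by simpa using hi) j (by simpa using hj) hij)
      (fun i _ => isOpen_interior.measurableSet)).symm
  have hIBvol : ∑ j ∈ Finset.range (cf.q n), MeasureTheory.volume (interior (B j)) =
      MeasureTheory.volume IB := by
    rw [hIBdef]
    exact (MeasureTheory.measure_biUnion_finset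
      (fun i hi j hj hij => hDBB i (by simpa using hi) j (by simpa using hj) hij)
      (fun j _ => isOpen_interior.measurableSet)).symm
  have hIAlow : ENNReal.ofReal ((cf.q (n + 1) : ℝ) * cf.l n) ≤ MeasureTheory.volume IA := by
    rw [← hIAvol]
    calc ENNReal.ofReal ((cf.q (n + 1) : ℝ) * cf.l n)
        = ENNReal.ofReal ((cf.q (n + 1) : ℝ)) * ENNReal.ofReal (cf.l n) :=
          ENNReal.ofReal_mul (by positivity)
      _ = (cf.q (n + 1) : ℝ≥0∞) * ENNReal.ofReal (cf.l n) := by rw [ENNReal.ofReal_natCast]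
      _ = (cf.q (n + 1)) • ENNReal.ofReal (cf.l n) := (nsmul_eq_mul _ _).symm
      _ = ∑ _i ∈ Finset.range (cf.q (n + 1)), ENNReal.ofReal (cf.l n) := by
          rw [Finset.sum_const, Finset.card_range]
      _ ≤ _ := Finset.sum_le_sum fun i _ => hvolA i
  have hIBlow : ENNReal.ofReal ((cf.q n : ℝ) * cf.l (n + 1)) ≤ MeasureTheory.volume IB := by
    rw [← hIBvol]
    calc ENNReal.ofReal ((cf.q n : ℝ) * cf.l (n + 1))
        = ENNReal.ofReal ((cf.q n : ℝ)) * ENNReal.ofReal (cf.l (n + 1)) :=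
          ENNReal.ofReal_mul (by positivity)
      _ = (cf.q n : ℝ≥0∞) * ENNReal.ofReal (cf.l (n + 1)) := by rw [ENNReal.ofReal_natCast]
      _ = (cf.q n) • ENNReal.ofReal (cf.l (n + 1)) := (nsmul_eq_mul _ _).symm
      _ = ∑ _j ∈ Finset.range (cf.q n), ENNReal.ofReal (cf.l (n + 1)) := by
          rw [Finset.sum_const, Finset.card_range]
      _ ≤ _ := Finset.sum_le_sum fun j _ => hvolB j
  have hdisj : Disjoint IA IB := by
    rw [hIAdef, hIBdef]
    refine disjoint_iUnion₂_left.2 fun i hi => disjoint_iUnion₂_right.2 fun j hj => ?_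
    exact hDAB i (by simpa using hi) j (by simpa using hj)
  have hIBmeas : MeasurableSet IB :=
    (isOpen_biUnion fun j _ => isOpen_interior).measurableSet
  have hunion : MeasureTheory.volume (IA ∪ IB) =
      MeasureTheory.volume IA + MeasureTheory.volume IB :=
    MeasureTheory.measure_union hdisj hIBmeas
  have hsub : IA ∪ IB ⊆ U :=
    Set.union_subset_union (Set.iUnion₂_mono fun i _ => interior_subset)
      (Set.iUnion₂_mono fun j _ => interior_subset)
  have h1vol : (1 : ℝ≥0∞) ≤ MeasureTheory.volume U := by
    have hc : (1 : ℝ≥0∞) = ENNReal.ofReal ((cf.q (n + 1) : ℝ) * cf.l n) +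
        ENNReal.ofReal ((cf.q n : ℝ) * cf.l (n + 1)) := by
      rw [← ENNReal.ofReal_add (by positivity) (by positivity), cf.sum_eq_one n,
        ENNReal.ofReal_one]
    calc (1 : ℝ≥0∞) = _ := hc
      _ ≤ MeasureTheory.volume IA + MeasureTheory.volume IB := add_le_add hIAlow hIBlow
      _ = MeasureTheory.volume (IA ∪ IB) := hunion.symm
      _ ≤ _ := MeasureTheory.measure_mono hsub
  by_contra hne
  have hcne : (Uᶜ).Nonempty := Set.nonempty_compl.2 hne
  have hopenc : IsOpen (Uᶜ) := hUclosed.isOpen_compl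
  have hpos := volume_pos_of_isOpen hopenc hcne
  have hadd := MeasureTheory.measure_add_measure_compl (μ := MeasureTheory.volume)
    hUclosed.measurableSet
  rw [AddCircle.measure_univ, ENNReal.ofReal_one] at hadd
  have hle : MeasureTheory.volume U ≤ 1 := by
    have := MeasureTheory.measure_mono (Set.subset_univ U)
      (μ := (MeasureTheory.volume : MeasureTheory.Measure (AddCircle (1:ℝ))))
    rwa [AddCircle.measure_univ, ENNReal.ofReal_one] at this
  have hUeq : MeasureTheory.volume U = 1 := le_antisymm hle h1vol
  rw [hUeq] at hadd
  have hzero : MeasureTheory.volume (Uᶜ) = 0 :=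
    (ENNReal.add_right_inj ENNReal.one_ne_top).1 (by rw [hadd, add_zero])
  exact absurd hzero hpos.ne'
end

section
/- Let d_0, d_∞ ≥ 2, d = d_0 + d_∞ - 1, c ∈ ℂ*, and define F_c(z) := -c · (Σ_{j=d_0}^{d} C(d,j)(-z)^j) / (Σ_{j=0}^{d_0-1} C(d,j)(-z)^j). Then F_c(0) = 0 with a zero of order d_0 at 0, F_c(1) = c, and 1 - (1/c)·F_c(-z) = (z+1)^d / (Σ_{j=0}^{d_0-1} C(d,j) z^j), so that z = 1 is a critical point of F_c of local degree d. -/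
open Filter

/-- The unicritical map
`F_c(z) = -c · (Σ_{j=d₀}^{d} C(d,j)(-z)^j) / (Σ_{j=0}^{d₀-1} C(d,j)(-z)^j)`,
where `d = d₀ + dinf - 1`. -/
noncomputable def Fc (d₀ dinf : ℕ) (c : ℂ) (z : ℂ) : ℂ :=
  -c * (∑ j ∈ Finset.Icc d₀ (d₀ + dinf - 1), ((d₀ + dinf - 1).choose j : ℂ) * (-z) ^ j) /
    (∑ j ∈ Finset.range d₀, ((d₀ + dinf - 1).choose j : ℂ) * (-z) ^ j)

/-- Partial alternating sum of binomial coefficients. -/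
lemma alt_sum_choose (n : ℕ) (m : ℕ) :
    (∑ j ∈ Finset.range (m + 1), ((n + 1).choose j : ℂ) * (-1 : ℂ) ^ j) =
      (-1) ^ m * (n.choose m) := by
  induction m with
  | zero => simp
  | succ m ih =>
    rw [Finset.sum_range_succ, ih, Nat.choose_succ_succ]
    push_cast
    ring

/-- **Properties of the unicritical map `F_c`.** For `d₀, dinf ≥ 2`, `d = d₀ + dinf - 1`
and `c ≠ 0`: `F_c(0) = 0` with a zero of order `d₀` at `0`, `F_c(1) = c`,
`1 - c⁻¹ F_c(-z) = (z+1)^d / (Σ_{j<d₀} C(d,j) z^j)` wherever the denominator is nonzero,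
and `z = 1` is a critical point of `F_c` of local degree `d`
(`F_c(z) - c` vanishes to order exactly `d` at `z = 1`). -/
theorem Fc_properties (d₀ dinf : ℕ) (h₀ : 2 ≤ d₀) (hinf : 2 ≤ dinf)
    (c : ℂ) (hc : c ≠ 0) (d : ℕ) (hd : d = d₀ + dinf - 1) :
    Fc d₀ dinf c 0 = 0 ∧
    (∃ g : ℂ → ℂ, AnalyticAt ℂ g 0 ∧ g 0 ≠ 0 ∧
      ∀ᶠ z in nhds (0 : ℂ), Fc d₀ dinf c z = z ^ d₀ * g z) ∧
    Fc d₀ dinf c 1 = c ∧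
    (∀ z : ℂ, (∑ j ∈ Finset.range d₀, (d.choose j : ℂ) * z ^ j) ≠ 0 →
      1 - c⁻¹ * Fc d₀ dinf c (-z) =
        (z + 1) ^ d / (∑ j ∈ Finset.range d₀, (d.choose j : ℂ) * z ^ j)) ∧
    (∃ h : ℂ → ℂ, AnalyticAt ℂ h 1 ∧ h 1 ≠ 0 ∧
      ∀ᶠ z in nhds (1 : ℂ), Fc d₀ dinf c z - c = (z - 1) ^ d * h z) := by
  have hdd : d₀ + 1 ≤ d := by omega
  set P : ℂ → ℂ := fun z => ∑ j ∈ Finset.range d₀, (d.choose j : ℂ) * z ^ j with hP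
  set Q : ℂ → ℂ := fun z => ∑ j ∈ Finset.Icc d₀ d, (d.choose j : ℂ) * z ^ j with hQdef
  have hFc : ∀ z : ℂ, Fc d₀ dinf c z = -c * Q (-z) / P (-z) := by
    intro z; rw [Fc, ← hd]
  -- binomial key identity
  have key : ∀ z : ℂ, P z + Q z = (z + 1) ^ d := by
    intro z
    have h1 := Finset.sum_range_add_sum_Ico (fun j => (d.choose j : ℂ) * z ^ j)
      (show d₀ ≤ d + 1 by omega)
    have h2 : Finset.Icc d₀ d = Finset.Ico d₀ (d + 1) := (Finset.Ico_add_one_right_eq_Icc d₀ d).symm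
    rw [hP, hQdef]
    simp only [h2]
    rw [h1, add_pow]
    refine Finset.sum_congr rfl fun k _ => by ring
  -- P(-1) ≠ 0 (alternating sum of binomial coefficients)
  have hPm1 : P (-1) = (-1) ^ (d₀ - 1) * ((d - 1).choose (d₀ - 1) : ℂ) := by
    have h := alt_sum_choose (d - 1) (d₀ - 1)
    rw [show d - 1 + 1 = d by omega, show d₀ - 1 + 1 = d₀ by omega] at h
    exact h
  have hPm1ne : P (-1) ≠ 0 := by
    rw [hPm1]
    refine mul_ne_zero (pow_ne_zero _ (by norm_num)) ?_
    exact_mod_cast (Nat.choose_pos (show d₀ - 1 ≤ d - 1 by omega)).ne'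
  have hP0 : P 0 = 1 := by
    show (∑ j ∈ Finset.range d₀, (d.choose j : ℂ) * (0:ℂ) ^ j) = 1
    rw [Finset.sum_eq_single 0]
    · simp
    · intro b _ hb; simp [zero_pow hb]
    · intro h; exact absurd (Finset.mem_range.mpr (by omega)) h
  -- factorization of Q
  set T : ℂ → ℂ := fun w => ∑ k ∈ Finset.range (d + 1 - d₀), (d.choose (d₀ + k) : ℂ) * w ^ k
    with hT
  have hQfact : ∀ w : ℂ, Q w = w ^ d₀ * T w := by
    intro w
    rw [hQdef, hT]
    simp only [← Finset.Ico_add_one_right_eq_Icc]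
    rw [Finset.sum_Ico_eq_sum_range, Finset.mul_sum]
    refine Finset.sum_congr (by rfl) fun k _ => ?_
    rw [pow_add]; ring
  have hT0 : T 0 = (d.choose d₀ : ℂ) := by
    show (∑ k ∈ Finset.range (d + 1 - d₀), (d.choose (d₀ + k) : ℂ) * (0:ℂ) ^ k) = (d.choose d₀ : ℂ)
    rw [Finset.sum_eq_single 0]
    · simp
    · intro b _ hb; simp [zero_pow hb]
    · intro h; exact absurd (Finset.mem_range.mpr (by omega)) h
  -- analyticity of the relevant polynomial maps
  have hPanal : ∀ x : ℂ, AnalyticAt ℂ (fun z => P (-z)) x := fun x =>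
    Finset.analyticAt_fun_sum _ fun j _ => analyticAt_const.mul ((analyticAt_id.neg).pow j)
  have hTanal : ∀ x : ℂ, AnalyticAt ℂ (fun z => T (-z)) x := fun x =>
    Finset.analyticAt_fun_sum _ fun j _ => analyticAt_const.mul ((analyticAt_id.neg).pow j)
  have hPm0ne : P (-(0 : ℂ)) ≠ 0 := by rw [neg_zero, hP0]; norm_num
  refine ⟨?_, ?_, ?_, ?_, ?_⟩
  · -- Fc 0 = 0
    rw [hFc, hQfact]
    simp [zero_pow (show d₀ ≠ 0 by omega)]
  · -- order d₀ zero at 0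
    refine ⟨fun z => -c * (-1) ^ d₀ * T (-z) / P (-z), ?_, ?_, ?_⟩
    · exact (analyticAt_const.mul (hTanal 0)).div (hPanal 0) hPm0ne
    · simp only [neg_zero, hT0, hP0, div_one]
      refine mul_ne_zero (mul_ne_zero (neg_ne_zero.mpr hc) (pow_ne_zero _ (by norm_num))) ?_
      exact_mod_cast (Nat.choose_pos (show d₀ ≤ d by omega)).ne'
    · filter_upwards with z
      rw [hFc z, hQfact, ← mul_div_assoc]
      congr 1
      rw [neg_pow]
      ring
  · -- Fc 1 = c
    have hq : Q (-1) = -P (-1) := by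
      have h := key (-1)
      rw [show ((-1 : ℂ) + 1) = 0 by ring, zero_pow (show d ≠ 0 by omega)] at h
      linear_combination h
    rw [hFc, hq, div_eq_iff hPm1ne]
    ring
  · -- the functional identity
    intro z hz
    rw [hFc]
    simp only [neg_neg]
    rw [eq_div_iff hz]
    have hkey := key z
    have hz' : P z ≠ 0 := hz
    field_simp
    linear_combination (P z) * hkey
  · -- local degree d at 1
    refine ⟨fun z => -c * (-1) ^ d / P (-z), ?_, ?_, ?_⟩
    · exact analyticAt_const.div (hPanal 1) hPm1ne
    · exact div_ne_zero (mul_ne_zero (neg_ne_zero.mpr hc) (pow_ne_zero _ (by norm_num)))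
        hPm1ne
    · have hev : ∀ᶠ z in nhds (1 : ℂ), P (-z) ≠ 0 :=
        ((hPanal 1).continuousAt).eventually_ne hPm1ne
      filter_upwards [hev] with z hz
      rw [hFc z]
      have hkey := key (-z)
      have h3 : ((z : ℂ) - 1) ^ d * (-1 : ℂ) ^ d = (-z + 1) ^ d := by
        rw [← mul_pow, show ((z:ℂ) - 1) * (-1) = -z + 1 by ring]
      rw [div_sub' hz, mul_div_assoc']
      rw [div_eq_div_iff hz hz]
      ring_nf
      linear_combination (-c * P (-z)) * hkey + (c * P (-z)) * h3
end

section
/- Non-Crossing Principle: if P_1 and P_2 are conformal rectangles on a Riemann surface, each of extremal width (modulus of its vertical curve family) strictly greater than 1, then P_1 and P_2 do not cross: there exist vertical leaves γ_1 of P_1 and γ_2 of P_2 that are disjoint. -/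
open MeasureTheory Set Filter Complex ENNReal
open scoped Topology

lemma countable_of_forall_not_accPt {S : Set ℂ} (h : ∀ x ∈ S, ¬ AccPt x (Filter.principal S)) :
    S.Countable := by
  have : DiscreteTopology S := by
    rw [discreteTopology_subtype_iff]
    intro x hx
    by_contra hne
    exact h x hx ⟨hne⟩
  have : Countable S := (TopologicalSpace.separableSpace_iff_countable).mp inferInstance
  exact Set.countable_coe_iff.mp this

lemma det_mul_complex (c : ℂ) :
    (((1 : ℂ →L[ℂ] ℂ).smulRight c).restrictScalars ℝ).det = Complex.normSq c := by
  have : (((1 : ℂ →L[ℂ] ℂ).smulRight c).restrictScalars ℝ : ℂ →ₗ[ℝ] ℂ).det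
      = Complex.normSq c := by
    rw [← LinearMap.det_toMatrix Complex.basisOneI, Matrix.det_fin_two]
    simp [LinearMap.toMatrix_apply, Complex.normSq_apply]
  exact this

/-- A conformal rectangle on (a domain in) `ℂ`: a continuous map
`φ : [0,m] × [0,1] → ℂ` restricting to a conformal embedding of the interior.
Its extremal width (the modulus of its vertical curve family) equals `m`. -/
structure ConformalRectangle where
  /-- the width of the rectangle -/
  m : ℝ
  m_pos : 0 < m
  /-- the uniformizing map -/
  φ : ℂ → ℂ
  continuousOn : ContinuousOn φ {z : ℂ | z.re ∈ Set.Icc 0 m ∧ z.im ∈ Set.Icc 0 1}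
  holo : DifferentiableOn ℂ φ {z : ℂ | z.re ∈ Set.Ioo 0 m ∧ z.im ∈ Set.Ioo 0 1}
  injOn : Set.InjOn φ {z : ℂ | z.re ∈ Set.Ioo 0 m ∧ z.im ∈ Set.Ioo 0 1}

/-- The vertical leaf of a conformal rectangle at horizontal coordinate `t`. -/
def ConformalRectangle.leaf (P : ConformalRectangle) (t : ℝ) : Set ℂ :=
  P.φ '' {z : ℂ | z.re = t ∧ z.im ∈ Set.Ioo (0 : ℝ) 1}

namespace ConformalRectangle

variable (P : ConformalRectangle)

/-- The open coordinate rectangle. -/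
def U : Set ℂ := {z : ℂ | z.re ∈ Set.Ioo 0 P.m ∧ z.im ∈ Set.Ioo 0 1}

lemma U_eq : P.U = Complex.re ⁻¹' (Set.Ioo 0 P.m) ∩ Complex.im ⁻¹' (Set.Ioo 0 1) := rfl

lemma isOpen_U : IsOpen P.U := by
  rw [U_eq]
  exact (isOpen_Ioo.preimage Complex.continuous_re).inter
    (isOpen_Ioo.preimage Complex.continuous_im)

lemma convex_U : Convex ℝ P.U := by
  rw [U_eq]
  exact ((convex_Ioo 0 P.m).linear_preimage Complex.reLm).inter
    ((convex_Ioo 0 1).linear_preimage Complex.imLm)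

lemma two_points : ∃ a b : ℂ, a ∈ P.U ∧ b ∈ P.U ∧ a ≠ b := by
  refine ⟨⟨P.m / 2, 1 / 3⟩, ⟨P.m / 2, 1 / 2⟩, ?_, ?_, ?_⟩
  · exact ⟨⟨by linarith [P.m_pos], by linarith [P.m_pos]⟩, by norm_num⟩
  · exact ⟨⟨by linarith [P.m_pos], by linarith [P.m_pos]⟩, by norm_num⟩
  · intro h
    rw [Complex.ext_iff] at h
    norm_num at h

lemma not_const {w : ℂ} (h : ∀ z ∈ P.U, P.φ z = w) : False := by
  obtain ⟨a, b, ha, hb, hab⟩ := P.two_points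
  exact hab (P.injOn ha hb (by rw [h a ha, h b hb]))

lemma analyticOnNhd : AnalyticOnNhd ℂ P.φ P.U := P.holo.analyticOnNhd P.isOpen_U

/-- The critical set of `φ` in `U`. -/
def Z : Set ℂ := {w : ℂ | w ∈ P.U ∧ deriv P.φ w = 0}

lemma countable_Z : P.Z.Countable := by
  apply countable_of_forall_not_accPt
  intro x hx hacc
  have hfreq : ∃ᶠ z in 𝓝[≠] x, deriv P.φ z = 0 := by
    have : ∃ᶠ z in 𝓝[≠] x, z ∈ P.Z := frequently_mem_iff_neBot.mpr hacc
    exact this.mono fun z hz => hz.2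
  have hder : AnalyticOnNhd ℂ (deriv P.φ) P.U := P.analyticOnNhd.deriv
  have hEq : Set.EqOn (deriv P.φ) 0 P.U :=
    hder.eqOn_zero_of_preconnected_of_frequently_eq_zero P.convex_U.isPreconnected hx.1 hfreq
  have hconst : ∀ z ∈ P.U, P.φ z = P.φ x := by
    intro z hz
    apply P.convex_U.is_const_of_fderivWithin_eq_zero P.holo _ hz hx.1
    intro y hy
    rw [fderivWithin_of_mem_nhds (P.isOpen_U.mem_nhds hy)]
    have hd : HasDerivAt P.φ 0 y := by
      have := (P.holo.differentiableAt (P.isOpen_U.mem_nhds hy)).hasDerivAt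
      rwa [hEq hy] at this
    rw [hd.hasFDerivAt.fderiv]
    ext
    simp
  exact P.not_const hconst

/-- The image of the open rectangle. -/
def Ω : Set ℂ := P.φ '' P.U

lemma isOpen_Ω : IsOpen P.Ω := by
  rcases P.analyticOnNhd.is_constant_or_isOpen P.convex_U.isPreconnected with h | h
  · obtain ⟨w, hw⟩ := h
    exact absurd hw P.not_const
  · exact h P.U subset_rfl P.isOpen_U

/-- A globally-defined inverse for `φ` on `Ω`. -/
noncomputable def σ : ℂ → ℂ := Function.invFunOn P.φ P.U

lemma σ_left : ∀ w ∈ P.U, P.σ (P.φ w) = w := fun w hw => P.injOn.leftInvOn_invFunOn hw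

lemma σ_spec : ∀ q ∈ P.Ω, P.σ q ∈ P.U ∧ P.φ (P.σ q) = q := by
  rintro q ⟨w', hw, rfl⟩
  rw [P.σ_left w' hw]
  exact ⟨hw, rfl⟩

lemma σ_strict {w : ℂ} (hw : w ∈ P.U) (hw' : w ∉ P.Z) :
    HasStrictDerivAt P.σ (deriv P.φ w)⁻¹ (P.φ w) := by
  have hne : deriv P.φ w ≠ 0 := fun h => hw' ⟨hw, h⟩
  have hstrict : HasStrictDerivAt P.φ (deriv P.φ w) w :=
    (P.analyticOnNhd w hw).hasStrictFDerivAt.hasStrictDerivAt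
  apply hstrict.to_local_left_inverse hne
  filter_upwards [P.isOpen_U.mem_nhds hw] with z hz using P.σ_left z hz

end ConformalRectangle

namespace ConformalRectangle

variable (P₁ P₂ : ConformalRectangle)

/-- Points of `P₂.U` that map to critical values of `P₁.φ`. -/
def bad : Set ℂ := {z : ℂ | z ∈ P₂.U ∧ P₂.φ z ∈ P₁.φ '' P₁.Z}

lemma countable_bad : (bad P₁ P₂).Countable :=
  Set.countable_of_injective_of_countable_image (P₂.injOn.mono fun _ hz => hz.1)
    ((P₁.countable_Z.image P₁.φ).mono (by rintro q ⟨z, hz, rfl⟩; exact hz.2))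

/-- The set where the transfer map is well behaved. -/
def good : Set ℂ := (P₂.U ∩ P₂.φ ⁻¹' P₁.Ω) \ bad P₁ P₂

lemma measurableSet_good : MeasurableSet (good P₁ P₂) :=
  ((ContinuousOn.isOpen_inter_preimage P₂.holo.continuousOn P₂.isOpen_U
    P₁.isOpen_Ω).measurableSet).diff (countable_bad P₁ P₂).measurableSet

lemma good_subset : good P₁ P₂ ⊆ P₂.U := fun _ hz => hz.1.1

/-- The transfer map `φ₁⁻¹ ∘ φ₂`. -/
noncomputable def transfer : ℂ → ℂ := fun z => P₁.σ (P₂.φ z)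

lemma transfer_mem {z : ℂ} (hz : z ∈ good P₁ P₂) : transfer P₁ P₂ z ∈ P₁.U :=
  (P₁.σ_spec _ hz.1.2).1

lemma transfer_injOn : Set.InjOn (transfer P₁ P₂) (good P₁ P₂) := by
  intro a ha b hb hab
  have ha' := (P₁.σ_spec _ ha.1.2).2
  have hb' := (P₁.σ_spec _ hb.1.2).2
  apply P₂.injOn (good_subset P₁ P₂ ha) (good_subset P₁ P₂ hb)
  rw [← ha', ← hb']
  exact congrArg P₁.φ hab

lemma transfer_hasDerivAt {z : ℂ} (hz : z ∈ good P₁ P₂) :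
    HasDerivAt (transfer P₁ P₂) (deriv (transfer P₁ P₂) z) z := by
  obtain ⟨w, hwU, hwφ⟩ := hz.1.2
  have hwZ : w ∉ P₁.Z := fun hWZ => hz.2 ⟨hz.1.1, ⟨w, hWZ, hwφ⟩⟩
  have hσs : HasStrictDerivAt P₁.σ (deriv P₁.φ w)⁻¹ (P₂.φ z) := hwφ ▸ P₁.σ_strict hwU hwZ
  have hφ₂ : HasDerivAt P₂.φ (deriv P₂.φ z) z :=
    (P₂.holo.differentiableAt (P₂.isOpen_U.mem_nhds (good_subset P₁ P₂ hz))).hasDerivAt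
  have hcomp : HasDerivAt (transfer P₁ P₂) ((deriv P₁.φ w)⁻¹ * deriv P₂.φ z) z :=
    HasDerivAt.comp z hσs.hasDerivAt hφ₂
  exact hcomp.deriv ▸ hcomp

/-- Length-area estimate along one vertical leaf of `P₂`. -/
lemma slice_bound {s : ℝ} (hs : s ∈ Set.Ioo 0 P₂.m)
    (hcross : ∀ t ∈ Set.Ioo 0 P₁.m, ∃ p, p ∈ P₁.leaf t ∧ p ∈ P₂.leaf s) :
    ENNReal.ofReal P₁.m ≤ ∫⁻ y in Set.Ioo (0:ℝ) 1,
      Set.indicator (good P₁ P₂) (fun z => (‖deriv (transfer P₁ P₂) z‖₊ : ℝ≥0∞))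
        ((s : ℂ) + (y : ℂ) * Complex.I) := by
  set T := transfer P₁ P₂ with hT
  set c := deriv T with hc
  set L : ℝ → ℂ := fun y => (s : ℂ) + (y : ℂ) * Complex.I with hL
  have hLcont : Continuous L :=
    continuous_const.add (Complex.continuous_ofReal.mul continuous_const)
  set A : Set ℝ := Set.Ioo (0:ℝ) 1 ∩ L ⁻¹' good P₁ P₂ with hA
  have hAm : MeasurableSet A :=
    measurableSet_Ioo.inter (hLcont.measurable (measurableSet_good P₁ P₂))
  set g : ℝ → ℝ := fun y => (T (L y)).re with hg
  set r : ℝ → ℝ := fun y => (Complex.I * c (L y)).re with hr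
  have hLd : ∀ y : ℝ, HasDerivAt L Complex.I y := by
    intro y
    have h1 : HasDerivAt (fun y : ℝ => (y : ℂ)) 1 y := by
      simpa using (hasDerivAt_id y).ofReal_comp
    have := (h1.mul_const Complex.I).const_add (s : ℂ)
    rw [one_mul] at this
    exact this
  have hder : ∀ y ∈ A, HasDerivWithinAt g (r y) A y := by
    intro y hy
    have hzG : L y ∈ good P₁ P₂ := hy.2
    have hψ : HasDerivAt T (c (L y)) (L y) := transfer_hasDerivAt P₁ P₂ hzG
    have hcomp : HasDerivAt (T ∘ L) (Complex.I • c (L y)) y := HasDerivAt.scomp_of_eq (x := y) (hg := hψ) (hh := hLd y) (hy := rfl)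
    have hre : HasDerivAt g (Complex.I * c (L y)).re y := by
      have := Complex.reCLM.hasFDerivAt.comp_hasDerivAt y (by simpa using hcomp)
      simp at this ⊢
      exact this
    exact hre.hasDerivWithinAt
  have himage : Set.Ioo 0 P₁.m \ (Complex.re '' P₁.Z) ⊆ g '' A := by
    rintro t ⟨ht, htZ⟩
    obtain ⟨p, ⟨w, ⟨hwre, hwim⟩, hwp⟩, ⟨v, ⟨hvre, hvim⟩, hvp⟩⟩ := hcross t ht
    have hwU : w ∈ P₁.U := ⟨hwre ▸ ht, hwim⟩
    have hwZ : w ∉ P₁.Z := fun hZ => htZ ⟨w, hZ, hwre⟩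
    have hvU : v ∈ P₂.U := ⟨hvre ▸ hs, hvim⟩
    have hvG : v ∈ good P₁ P₂ := by
      constructor
      · exact ⟨hvU, ⟨w, hwU, by rw [hwp, hvp]⟩⟩
      · rintro ⟨-, w', hw'Z, hw'⟩
        exact hwZ (by rwa [P₁.injOn hw'Z.1 hwU (by rw [hw', hvp, hwp])] at hw'Z)
    have hLv : L v.im = v := by
      apply Complex.ext <;> simp [hL, hvre]
    refine ⟨v.im, ⟨hvim, by simp only [Set.mem_preimage, hLv]; exact hvG⟩, ?_⟩
    have hσ : T v = w := by
      have : P₂.φ v = P₁.φ w := by rw [hwp, hvp]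
      rw [hT]; show P₁.σ (P₂.φ v) = w
      rw [this, P₁.σ_left w hwU]
    rw [hg]; show (T (L v.im)).re = t
    rw [hLv, hσ, hwre]
  have hstep1 : ENNReal.ofReal P₁.m ≤ volume (g '' A) := by
    have h0 : volume (Complex.re '' P₁.Z) = 0 :=
      ((P₁.countable_Z.image Complex.re).measure_zero _)
    calc ENNReal.ofReal P₁.m = volume (Set.Ioo 0 P₁.m) := by simp
      _ ≤ volume (g '' A) + volume (Complex.re '' P₁.Z) := by
          rw [← diff_union_inter (Set.Ioo 0 P₁.m) (Complex.re '' P₁.Z)]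
          exact le_trans (measure_union_le _ _)
            (add_le_add (measure_mono himage) (measure_mono inter_subset_right))
      _ = volume (g '' A) := by rw [h0, add_zero]
  have hstep2 : volume (g '' A) ≤
      ∫⁻ y in A, ENNReal.ofReal |r y| := by
    have := addHaar_image_le_lintegral_abs_det_fderiv volume hAm
      (f' := fun y => (1 : ℝ →L[ℝ] ℝ).smulRight (r y))
      (fun y hy => (hder y hy).hasFDerivWithinAt)
    simpa [ContinuousLinearMap.smulRight_one_eq_toSpanSingleton, ContinuousLinearMap.det_toSpanSingleton] using this
  have hmeas : Measurable fun y =>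
      Set.indicator (good P₁ P₂) (fun z => (‖c z‖₊ : ℝ≥0∞)) (L y) :=
    ((measurable_deriv T).nnnorm.coe_nnreal_ennreal.indicator
      (measurableSet_good P₁ P₂)).comp hLcont.measurable
  have hstep3 : ∫⁻ y in A, ENNReal.ofReal |r y| ≤
      ∫⁻ y in A, Set.indicator (good P₁ P₂) (fun z => (‖c z‖₊ : ℝ≥0∞)) (L y) := by
    apply setLIntegral_mono hmeas
    intro y hy
    rw [Set.indicator_of_mem (Set.mem_preimage.mp hy.2)]
    rw [hr]
    have h1 : |(Complex.I * c (L y)).re| ≤ ‖c (L y)‖ := by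
      refine le_trans (Complex.abs_re_le_norm _) ?_
      simp
    refine le_trans (ENNReal.ofReal_le_ofReal h1) ?_
    exact (ofReal_norm _).le
  have hstep4 : ∫⁻ y in A, Set.indicator (good P₁ P₂) (fun z => (‖c z‖₊ : ℝ≥0∞)) (L y) ≤
      ∫⁻ y in Set.Ioo (0:ℝ) 1,
        Set.indicator (good P₁ P₂) (fun z => (‖c z‖₊ : ℝ≥0∞)) (L y) :=
    lintegral_mono_set inter_subset_left
  exact hstep1.trans (hstep2.trans (hstep3.trans hstep4))

lemma volume_good_le : volume P₁.U ≤ ENNReal.ofReal P₁.m := by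
  have hUeq : P₁.U = Complex.measurableEquivRealProd ⁻¹'
      (Set.Ioo 0 P₁.m ×ˢ Set.Ioo (0:ℝ) 1) := by
    ext z
    simp [ConformalRectangle.U, Complex.measurableEquivRealProd, Complex.equivRealProd]
  rw [hUeq, Complex.volume_preserving_equiv_real_prod.measure_preimage
    ((measurableSet_Ioo.prod measurableSet_Ioo).nullMeasurableSet)]
  rw [MeasureTheory.Measure.volume_eq_prod, MeasureTheory.Measure.prod_prod]
  simp [Real.volume_Ioo]

/-- Area estimate: the transfer map is injective into `P₁.U`. -/
lemma area_bound :
    ∫⁻ z in good P₁ P₂, ((‖deriv (transfer P₁ P₂) z‖₊ : ℝ≥0∞)) ^ 2 ≤ ENNReal.ofReal P₁.m := by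
  set T := transfer P₁ P₂ with hT
  set G := good P₁ P₂ with hG
  have hF : ∀ z ∈ G, HasFDerivWithinAt T
      (((1 : ℂ →L[ℂ] ℂ).smulRight (deriv T z)).restrictScalars ℝ) G z := fun z hz =>
    (((transfer_hasDerivAt P₁ P₂ hz).hasFDerivAt).restrictScalars ℝ).hasFDerivWithinAt
  have hcov := lintegral_image_eq_lintegral_abs_det_fderiv_mul volume
    (measurableSet_good P₁ P₂) hF (transfer_injOn P₁ P₂) (fun _ => (1 : ℝ≥0∞))
  have hdet : ∀ z : ℂ, ENNReal.ofReal
      |(((1 : ℂ →L[ℂ] ℂ).smulRight (deriv T z)).restrictScalars ℝ).det|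
      = ((‖deriv T z‖₊ : ℝ≥0∞)) ^ 2 := by
    intro z
    rw [det_mul_complex, _root_.abs_of_nonneg (Complex.normSq_nonneg _)]
    rw [show Complex.normSq (deriv T z) = ‖deriv T z‖ ^ 2 by
      rw [Complex.normSq_eq_norm_sq]]
    rw [ENNReal.ofReal_pow (norm_nonneg _)]; exact congrArg (· ^ 2) (ofReal_norm _)
  have himg : T '' G ⊆ P₁.U := by
    rintro q ⟨z, hz, rfl⟩
    exact transfer_mem P₁ P₂ hz
  calc ∫⁻ z in G, ((‖deriv T z‖₊ : ℝ≥0∞)) ^ 2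
      = ∫⁻ x in T '' G, (1 : ℝ≥0∞) := by
        rw [hcov]
        apply setLIntegral_congr_fun (measurableSet_good P₁ P₂)
        exact fun z _ => by simp only [mul_one, hdet z]
    _ = volume (T '' G) := setLIntegral_one _
    _ ≤ volume P₁.U := measure_mono himg
    _ ≤ ENNReal.ofReal P₁.m := volume_good_le P₁

end ConformalRectangle

/-- Baby Cauchy-Schwarz for `lintegral`. -/
lemma lintegral_sq_bound {α : Type*} [MeasurableSpace α] (μ : Measure α) (f : α → ℝ≥0∞)
    (hf : AEMeasurable f μ) :
    (∫⁻ a, f a ∂μ) ^ 2 ≤ (∫⁻ a, (f a) ^ 2 ∂μ) * μ Set.univ := by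
  have hpq : Real.HolderConjugate 2 2 := Real.HolderConjugate.two_two
  have h := ENNReal.lintegral_mul_le_Lp_mul_Lq μ hpq hf
    (aemeasurable_const (b := (1:ℝ≥0∞)))
  simp only [Pi.mul_apply, mul_one, ENNReal.one_rpow, lintegral_const] at h
  have h2 : (∫⁻ a, f a ∂μ) ^ 2 ≤
      ((∫⁻ a, f a ^ (2:ℝ) ∂μ) ^ (1/(2:ℝ)) * (1 * μ Set.univ) ^ (1/(2:ℝ))) ^ 2 := by
    exact pow_le_pow_left' h 2
  refine h2.trans ?_
  rw [mul_pow]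
  have hx : ∀ X : ℝ≥0∞, (X ^ (1/(2:ℝ))) ^ 2 = X := by
    intro X
    rw [← ENNReal.rpow_natCast (X ^ (1/(2:ℝ))) 2, ← ENNReal.rpow_mul]
    norm_num
  rw [hx, hx, one_mul]
  have heq : ∀ a, f a ^ (2:ℝ) = f a ^ 2 := fun a => by
    rw [← ENNReal.rpow_natCast (f a) 2]; norm_num
  simp_rw [heq]
  exact le_rfl

/-- **Non-Crossing Principle.** If two conformal rectangles each have extremal width
strictly greater than `1`, then they do not cross: there exist vertical leaves
`γ₁` of `P₁` and `γ₂` of `P₂` that are disjoint. -/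
theorem non_crossing_principle (P₁ P₂ : ConformalRectangle)
    (h₁ : 1 < P₁.m) (h₂ : 1 < P₂.m) :
    ∃ t₁ ∈ Set.Ioo 0 P₁.m, ∃ t₂ ∈ Set.Ioo 0 P₂.m,
      Disjoint (P₁.leaf t₁) (P₂.leaf t₂) := by
  by_contra hcon
  push_neg at hcon
  classical
  set T := ConformalRectangle.transfer P₁ P₂ with hT
  set G := ConformalRectangle.good P₁ P₂ with hG
  set nrm : ℂ → ℝ≥0∞ := fun z => (‖deriv T z‖₊ : ℝ≥0∞) with hnrm
  set K : ℂ → ℝ≥0∞ := fun z => (G.indicator nrm z) ^ 2 with hK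
  have hGm := ConformalRectangle.measurableSet_good P₁ P₂
  have hnm : Measurable (G.indicator nrm) :=
    ((measurable_deriv T).nnnorm.coe_nnreal_ennreal).indicator hGm
  have hKm : Measurable K := hnm.pow_const 2
  -- the squared slice estimate
  have hslice : ∀ s ∈ Set.Ioo 0 P₂.m,
      (ENNReal.ofReal P₁.m) ^ 2 ≤ ∫⁻ y in Set.Ioo (0:ℝ) 1,
        K ((s:ℂ) + (y:ℂ) * Complex.I) := by
    intro s hs
    have hcross : ∀ t ∈ Set.Ioo 0 P₁.m, ∃ p, p ∈ P₁.leaf t ∧ p ∈ P₂.leaf s := by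
      intro t ht
      obtain ⟨p, hp1, hp2⟩ := Set.not_disjoint_iff.mp (hcon t ht s hs)
      exact ⟨p, hp1, hp2⟩
    have h1 := ConformalRectangle.slice_bound P₁ P₂ hs hcross
    set f : ℝ → ℝ≥0∞ := fun y => G.indicator nrm ((s:ℂ) + (y:ℂ) * Complex.I) with hf
    have hfm : Measurable f := hnm.comp
      (continuous_const.add (Complex.continuous_ofReal.mul continuous_const)).measurable
    have hCS := lintegral_sq_bound (volume.restrict (Set.Ioo (0:ℝ) 1)) f hfm.aemeasurable
    rw [Measure.restrict_apply_univ] at hCS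
    have hvol : volume (Set.Ioo (0:ℝ) 1) = 1 := by simp [Real.volume_Ioo]
    rw [hvol, mul_one] at hCS
    calc (ENNReal.ofReal P₁.m) ^ 2 ≤ (∫⁻ y in Set.Ioo (0:ℝ) 1, f y) ^ 2 :=
          pow_le_pow_left' h1 2
      _ ≤ ∫⁻ y in Set.Ioo (0:ℝ) 1, (f y) ^ 2 := hCS
      _ = ∫⁻ y in Set.Ioo (0:ℝ) 1, K ((s:ℂ) + (y:ℂ) * Complex.I) := rfl
  -- Fubini setup
  set Fp : ℝ × ℝ → ℝ≥0∞ := fun p => K ((p.1 : ℂ) + (p.2 : ℂ) * Complex.I) with hFp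
  have hFpm : Measurable Fp := hKm.comp
    (((Complex.continuous_ofReal.comp continuous_fst).add
      ((Complex.continuous_ofReal.comp continuous_snd).mul continuous_const)).measurable)
  set Fp' : ℝ × ℝ → ℝ≥0∞ := fun p => (Set.Ioo (0:ℝ) 1).indicator
      (fun y => K ((p.1 : ℂ) + (y : ℂ) * Complex.I)) p.2 with hFp'
  have hFp'eq : Fp' = Set.indicator (Set.univ ×ˢ Set.Ioo (0:ℝ) 1) Fp := by
    funext p
    by_cases h : p.2 ∈ Set.Ioo (0:ℝ) 1
    · rw [hFp']
      simp only [Set.indicator_of_mem h]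
      rw [Set.indicator_of_mem (by simpa using h)]
    · rw [hFp']
      simp only [Set.indicator_of_notMem h]
      rw [Set.indicator_of_notMem (by simpa using h)]
  have hFp'm : Measurable Fp' := by
    rw [hFp'eq]
    exact hFpm.indicator (MeasurableSet.univ.prod measurableSet_Ioo)
  have hinner : ∀ s : ℝ, ∫⁻ y, Fp' (s, y) =
      ∫⁻ y in Set.Ioo (0:ℝ) 1, K ((s:ℂ) + (y:ℂ) * Complex.I) := by
    intro s
    rw [hFp']
    exact lintegral_indicator measurableSet_Ioo _
  have hinner_meas : Measurable fun s : ℝ => ∫⁻ y, Fp' (s, y) :=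
    hFp'm.lintegral_prod_right'
  -- the chain of inequalities
  have hmain : (ENNReal.ofReal P₁.m) ^ 2 * ENNReal.ofReal P₂.m ≤ ENNReal.ofReal P₁.m := by
    calc (ENNReal.ofReal P₁.m) ^ 2 * ENNReal.ofReal P₂.m
        = ∫⁻ _ in Set.Ioo 0 P₂.m, (ENNReal.ofReal P₁.m) ^ 2 := by
          rw [setLIntegral_const, Real.volume_Ioo, sub_zero]
      _ ≤ ∫⁻ s in Set.Ioo 0 P₂.m, ∫⁻ y, Fp' (s, y) := by
          refine setLIntegral_mono hinner_meas fun s hs => ?_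
          rw [hinner s]
          exact hslice s hs
      _ ≤ ∫⁻ s, ∫⁻ y, Fp' (s, y) := setLIntegral_le_lintegral _ _
      _ = ∫⁻ p : ℝ × ℝ, Fp' p := by
          rw [MeasureTheory.Measure.volume_eq_prod]
          exact (lintegral_prod Fp' hFp'm.aemeasurable).symm
      _ ≤ ∫⁻ p : ℝ × ℝ, Fp p := by
          rw [hFp'eq]
          exact lintegral_mono fun p => Set.indicator_le_self _ _ _
      _ = ∫⁻ z : ℂ, K z := by
          have := Complex.volume_preserving_equiv_real_prod.lintegral_comp hFpm
          rw [← this]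
          refine lintegral_congr fun z => ?_
          rw [hFp]
          simp only [Complex.measurableEquivRealProd_apply]
          rw [Complex.re_add_im]
      _ = ∫⁻ z in G, (nrm z) ^ 2 := by
          have hind : K = G.indicator (fun z => (nrm z) ^ 2) := by
            funext z
            by_cases h : z ∈ G
            · rw [hK]; simp only [Set.indicator_of_mem h]
            · rw [hK]; simp only [Set.indicator_of_notMem h]
              exact zero_pow two_ne_zero
          rw [hind, lintegral_indicator hGm]
      _ ≤ ENNReal.ofReal P₁.m := ConformalRectangle.area_bound P₁ P₂
  -- numeric contradiction
  set a := ENNReal.ofReal P₁.m with ha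
  set b := ENNReal.ofReal P₂.m with hb
  have ha1 : 1 < a := ENNReal.one_lt_ofReal.mpr h₁
  have hb1 : 1 < b := ENNReal.one_lt_ofReal.mpr h₂
  have ha0 : a ≠ 0 := fun h => by rw [h] at ha1; exact absurd ha1 (by simp)
  have hatop : a ≠ ⊤ := ENNReal.ofReal_ne_top
  have hfinal : a < a :=
    calc a = a * 1 := (mul_one a).symm
      _ < a * (a * b) := by
          rw [ENNReal.mul_lt_mul_iff_right ha0 hatop]
          calc (1:ℝ≥0∞) < a := ha1
            _ = a * 1 := (mul_one a).symm
            _ ≤ a * b := mul_le_mul_right hb1.le a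
      _ = a ^ 2 * b := by ring
      _ ≤ a := hmain
  exact lt_irrefl _ hfinal
end
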